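/- Suppose that for a cost vector ĉ ∈ ℝ^d, a compact convex set S ⊆ ℝ^d with diameter Δ(S), and a constant ν ≥ 0, one has the strong-optimality inequality ⟨ĉ, w − w*(ĉ)⟩ ≥ (ν/Δ(S)) ‖w − w*(ĉ)‖² for all w ∈ S, where w*(ĉ) minimizes ⟨ĉ, ·⟩ over S. If c₁, c₂ are two unit vectors (‖c₁‖ = ‖c₂‖ = 1) each satisfying this inequality with the same constant η > 0 (i.e., ⟨cᵢ, w − w*(cᵢ)⟩ ≥ (η/Δ(S))‖w − w*(cᵢ)‖² for all w ∈ S, i = 1, 2), then ‖w*(c₁) − w*(c₂)‖ ≤ (Δ(S)/(2η)) ‖c₁ − c₂‖. -/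

import Mathlib

open RealInnerProductSpace

/-- If two unit cost vectors both satisfy the strong-optimality inequality
with constant `η > 0` over the compact convex set `S`, then their minimizers
are `(diam S / (2η))`-Lipschitz-close. -/
theorem stmt_4 {d : ℕ} (S : Set (EuclideanSpace ℝ (Fin d)))
    (hS : S.Nonempty) (hScomp : IsCompact S) (hSconv : Convex ℝ S)
    (wstar : EuclideanSpace ℝ (Fin d) → EuclideanSpace ℝ (Fin d))
    (hmem : ∀ c, wstar c ∈ S)
    (hmin : ∀ c, ∀ w ∈ S, ⟪c, wstar c⟫ ≤ ⟪c, w⟫)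
    (η : ℝ) (hη : 0 < η)
    (c₁ c₂ : EuclideanSpace ℝ (Fin d)) (hc₁ : ‖c₁‖ = 1) (hc₂ : ‖c₂‖ = 1)
    (hstrong₁ : ∀ w ∈ S,
      (η / Metric.diam S) * ‖w - wstar c₁‖ ^ 2 ≤ ⟪c₁, w - wstar c₁⟫)
    (hstrong₂ : ∀ w ∈ S,
      (η / Metric.diam S) * ‖w - wstar c₂‖ ^ 2 ≤ ⟪c₂, w - wstar c₂⟫) :
    ‖wstar c₁ - wstar c₂‖ ≤ (Metric.diam S / (2 * η)) * ‖c₁ - c₂‖ := by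
  set w₁ := wstar c₁
  set w₂ := wstar c₂
  set Δ := Metric.diam S
  by_cases h : w₁ = w₂
  · have : ‖w₁ - w₂‖ = 0 := by simp [h]
    rw [this]
    positivity
  · have hne : ‖w₁ - w₂‖ > 0 := by
      simpa [sub_eq_zero] using h
    have hΔ : 0 < Δ := lt_of_lt_of_le hne (Metric.dist_le_diam_of_mem hScomp.isBounded (hmem c₁) (hmem c₂) |>.trans_eq' (by rw [dist_eq_norm]))
    have h1 := hstrong₁ w₂ (hmem c₂)
    have h2 := hstrong₂ w₁ (hmem c₁)
    have hnorm : ‖w₂ - w₁‖ = ‖w₁ - w₂‖ := norm_sub_rev _ _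
    have hsum : (2 * η / Δ) * ‖w₁ - w₂‖ ^ 2 ≤ ⟪c₁ - c₂, w₂ - w₁⟫ := by
      have : ⟪c₁ - c₂, w₂ - w₁⟫ = ⟪c₁, w₂ - w₁⟫ + ⟪c₂, w₁ - w₂⟫ := by
        rw [inner_sub_left]
        have : w₁ - w₂ = -(w₂ - w₁) := by abel
        rw [this, inner_neg_right]
        ring
      rw [this]
      have := add_le_add h1 h2
      calc (2 * η / Δ) * ‖w₁ - w₂‖ ^ 2
          = (η / Δ) * ‖w₂ - w₁‖ ^ 2 + (η / Δ) * ‖w₁ - w₂‖ ^ 2 := by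
            rw [hnorm]; ring
        _ ≤ _ := add_le_add h1 h2
    have hcs : ⟪c₁ - c₂, w₂ - w₁⟫ ≤ ‖c₁ - c₂‖ * ‖w₁ - w₂‖ := by
      calc ⟪c₁ - c₂, w₂ - w₁⟫ ≤ ‖c₁ - c₂‖ * ‖w₂ - w₁‖ := real_inner_le_norm _ _
        _ = ‖c₁ - c₂‖ * ‖w₁ - w₂‖ := by rw [hnorm]
    have key : (2 * η / Δ) * ‖w₁ - w₂‖ ^ 2 ≤ ‖c₁ - c₂‖ * ‖w₁ - w₂‖ := hsum.trans hcs
    have : (2 * η / Δ) * ‖w₁ - w₂‖ ≤ ‖c₁ - c₂‖ := by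
      have := (mul_le_mul_iff_left₀ hne).mp (by nlinarith [key] : ((2 * η / Δ) * ‖w₁ - w₂‖) * ‖w₁ - w₂‖ ≤ ‖c₁ - c₂‖ * ‖w₁ - w₂‖)
      exact this
    rw [div_mul_eq_mul_div, le_div_iff₀ (by positivity)]
    have h4 : (2 * η / Δ) * ‖w₁ - w₂‖ * Δ ≤ ‖c₁ - c₂‖ * Δ :=
      mul_le_mul_of_nonneg_right this hΔ.le
    have h5 : 2 * η / Δ * Δ = 2 * η := div_mul_cancel₀ _ hΔ.ne'
    nlinarith [h4, h5]
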